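/- Let d1, d2 be positive real numbers, set t = d1*d2/(d1 + 4*d2) and y = 4*d2/(d1 + 2*d2). Define S : ℝ × ℝ → ℝ by S(x1, x2) = (1/2)*(d1/x1 + d2/x2) - (1/4)*(t*x2/x1^2 + 2*t/x2), and let C = {(x1, x2) : x1 > 0, x2 > 0, x1^d1 * x2^d2 = y^d2} (real powers of positive bases). Then S restricted to C has a local minimum at the point (1, y), i.e. IsLocalMinOn S C (1, y). -/

import Mathlib

open Real Filter Set

lemma expsum_localmin (c1 c2 c3 e1 e2 e3 : ℝ) (f : ℝ → ℝ)
    (hf : f = fun v => c1 * Real.exp (e1*v) + c2 * Real.exp (e2*v) + c3 * Real.exp (e3*v))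
    (h1 : c1*e1 + c2*e2 + c3*e3 = 0)
    (h2 : 0 < c1*e1^2 + c2*e2^2 + c3*e3^2) :
    ∀ᶠ v in nhds (0:ℝ), f 0 ≤ f v := by
  subst hf
  set g : ℝ → ℝ := fun v => c1*e1*Real.exp (e1*v) + c2*e2*Real.exp (e2*v) + c3*e3*Real.exp (e3*v) with hg
  set h : ℝ → ℝ := fun v => c1*e1^2*Real.exp (e1*v) + c2*e2^2*Real.exp (e2*v) + c3*e3^2*Real.exp (e3*v) with hh
  have hexp : ∀ (c e v : ℝ), HasDerivAt (fun v => c * Real.exp (e*v)) (c*e*Real.exp (e*v)) v := by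
    intro c e v
    have h' := (((hasDerivAt_id v).const_mul e).exp).const_mul c
    simp only [id] at h'
    exact h'.congr_deriv (by ring)
  have hdf : ∀ v, HasDerivAt (fun v => c1 * Real.exp (e1*v) + c2 * Real.exp (e2*v) + c3 * Real.exp (e3*v)) (g v) v :=
    fun v => ((hexp c1 e1 v).add (hexp c2 e2 v)).add (hexp c3 e3 v)
  have hdg : ∀ v, HasDerivAt g (h v) v := by
    intro v
    have h' := ((hexp (c1*e1) e1 v).add (hexp (c2*e2) e2 v)).add (hexp (c3*e3) e3 v)
    exact h'.congr_deriv (by simp only [hh]; ring)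
  have hcont : Continuous h := by rw [hh]; fun_prop
  have hpos : 0 < h 0 := by simpa [hh] using h2
  have hev : ∀ᶠ v in nhds (0:ℝ), 0 < h v :=
    hcont.continuousAt.eventually (eventually_gt_nhds hpos)
  rw [Metric.eventually_nhds_iff] at hev
  obtain ⟨ε, hε, hball⟩ := hev
  have hballabs : ∀ v : ℝ, |v| < ε → 0 < h v := by
    intro v hv
    exact hball (by simpa [Real.dist_eq] using hv)
  have hgm : StrictMonoOn g (Ioo (-ε) ε) := by
    apply strictMonoOn_of_deriv_pos (convex_Ioo _ _)
    · exact (by rw [hg]; fun_prop : Continuous g).continuousOn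
    · intro v hv
      rw [interior_Ioo] at hv
      rw [(hdg v).deriv]
      exact hballabs v (abs_lt.2 ⟨hv.1, hv.2⟩)
  have hg0 : g 0 = 0 := by simp [hg]; linarith
  have hmem0 : (0:ℝ) ∈ Ioo (-ε) ε := ⟨by linarith, hε⟩
  set f : ℝ → ℝ := fun v => c1 * Real.exp (e1*v) + c2 * Real.exp (e2*v) + c3 * Real.exp (e3*v) with hfdef
  have hcf : Continuous f := by rw [hfdef]; fun_prop
  have hmono : MonotoneOn f (Icc 0 (ε/2)) := by
    apply monotoneOn_of_deriv_nonneg (convex_Icc _ _) hcf.continuousOn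
    · intro v hv; exact (hdf v).differentiableAt.differentiableWithinAt
    · intro v hv
      rw [interior_Icc] at hv
      rw [(hdf v).deriv]
      have : g 0 < g v := hgm hmem0 ⟨by linarith [hv.1], by linarith [hv.2]⟩ hv.1
      linarith [hg0]
  have hanti : AntitoneOn f (Icc (-(ε/2)) 0) := by
    apply antitoneOn_of_deriv_nonpos (convex_Icc _ _) hcf.continuousOn
    · intro v hv; exact (hdf v).differentiableAt.differentiableWithinAt
    · intro v hv
      rw [interior_Icc] at hv
      rw [(hdf v).deriv]
      have : g v < g 0 := hgm ⟨by linarith [hv.1], by linarith [hv.2]⟩ hmem0 hv.2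
      linarith [hg0]
  have hIoo : Ioo (-(ε/2)) (ε/2) ∈ nhds (0:ℝ) := Ioo_mem_nhds (by linarith) (by linarith)
  filter_upwards [hIoo] with v hv
  rcases le_total v 0 with hvle | hvle
  · exact hanti ⟨hv.1.le, hvle⟩ ⟨by linarith, le_refl 0⟩ hvle
  · exact hmono ⟨le_refl 0, by linarith⟩ ⟨hvle, hv.2.le⟩ hvle

/-- Theorem 3 (Theorem B), non-Kähler case: the scalar curvature restricted to
the metrics of fixed volume has a local minimum at (1, y) with
y = 4*d2/(d1+2*d2). -/
theorem non_kahler_einstein_local_min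
    (d1 d2 : ℝ) (hd1 : 0 < d1) (hd2 : 0 < d2)
    (t : ℝ) (ht : t = d1 * d2 / (d1 + 4 * d2))
    (y : ℝ) (hy : y = 4 * d2 / (d1 + 2 * d2))
    (S : ℝ × ℝ → ℝ)
    (hS : S = fun p => (1 / 2) * (d1 / p.1 + d2 / p.2)
      - (1 / 4) * (t * p.2 / p.1 ^ 2 + 2 * t / p.2))
    (C : Set (ℝ × ℝ))
    (hC : C = {p : ℝ × ℝ | 0 < p.1 ∧ 0 < p.2 ∧ p.1 ^ d1 * p.2 ^ d2 = y ^ d2}) :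
    IsLocalMinOn S C (1, y) := by
  have h24 : d1 + 4 * d2 ≠ 0 := by positivity
  have h22 : d1 + 2 * d2 ≠ 0 := by positivity
  have hy0 : 0 < y := by rw [hy]; positivity
  have ht0 : 0 < t := by rw [ht]; positivity
  set φ : ℝ → ℝ := fun v => (d1/2) * Real.exp ((-1)*v) + ((d2-t)/(2*y)) * Real.exp ((d1/d2)*v)
      + (-(t*y/4)) * Real.exp ((-(d1/d2+2))*v) with hφ
  have hmin : ∀ᶠ v in nhds (0:ℝ), φ 0 ≤ φ v := by
    apply expsum_localmin (d1/2) ((d2-t)/(2*y)) (-(t*y/4)) (-1) (d1/d2) (-(d1/d2+2)) φ hφ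
    · subst ht hy
      field_simp
      ring
    · have heq2 : (d1/2)*(-1)^2 + ((d2-t)/(2*y))*(d1/d2)^2 + (-(t*y/4))*(-(d1/d2+2))^2
          = d1^2*(d1+d2)/(2*(d2*(d1+4*d2))) := by
        subst ht hy
        field_simp
        ring
      rw [heq2]
      positivity
  -- On C, S p = φ (log p.1)
  have key : ∀ p ∈ C, S p = φ (Real.log p.1) := by
    intro p hp
    rw [hC] at hp
    obtain ⟨hx1, hx2, heq⟩ := hp
    have hq : 0 < p.2 * p.1 ^ (d1/d2) := by positivity
    have h1 : (p.2 * p.1 ^ (d1/d2)) ^ d2 = y ^ d2 := by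
      rw [Real.mul_rpow hx2.le (Real.rpow_nonneg hx1.le _),
        ← Real.rpow_mul hx1.le, div_mul_cancel₀ _ hd2.ne', ← heq]
      ring
    have h2 := congrArg Real.log h1
    rw [Real.log_rpow hq, Real.log_rpow hy0] at h2
    have h3 := mul_left_cancel₀ hd2.ne' h2
    have hx2y : p.2 * p.1 ^ (d1/d2) = y := by
      rw [← Real.exp_log hq, h3, Real.exp_log hy0]
    have hxa : p.1 ^ (d1/d2) = y / p.2 := by
      field_simp [hx2.ne'] at hx2y ⊢
      linarith [hx2y]
    have l1 : Real.exp ((-1) * Real.log p.1) = p.1⁻¹ := by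
      rw [neg_one_mul, Real.exp_neg, Real.exp_log hx1]
    have l2 : Real.exp ((d1/d2) * Real.log p.1) = y / p.2 := by
      rw [← hxa, Real.rpow_def_of_pos hx1, mul_comm]
    have l3 : Real.exp ((-(d1/d2+2)) * Real.log p.1) = (y / p.2)⁻¹ * (p.1 * p.1)⁻¹ := by
      have harg : (-(d1/d2+2)) * Real.log p.1
          = -((d1/d2) * Real.log p.1) + -(Real.log p.1 + Real.log p.1) := by ring
      rw [harg, Real.exp_add, Real.exp_neg, Real.exp_neg, Real.exp_add, Real.exp_log hx1, l2]
    rw [hS, hφ]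
    simp only [l1, l2, l3]
    have hx1' : p.1 ≠ 0 := hx1.ne'
    have hx2' : p.2 ≠ 0 := hx2.ne'
    field_simp
    ring
  have h1yC : ((1:ℝ), y) ∈ C := by
    rw [hC]
    exact ⟨one_pos, hy0, by rw [Real.one_rpow, one_mul]⟩
  have hS1y : S (1, y) = φ 0 := by
    have := key (1, y) h1yC
    simpa [Real.log_one] using this
  have htend : Filter.Tendsto (fun p : ℝ × ℝ => Real.log p.1) (nhds ((1:ℝ), y)) (nhds 0) := by
    have hlog : ContinuousAt (fun p : ℝ × ℝ => Real.log p.1) ((1:ℝ), y) := by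
      have h' : ContinuousAt (Real.log ∘ Prod.fst) ((1:ℝ), y) :=
        ContinuousAt.comp (Real.continuousAt_log one_ne_zero) continuousAt_fst
      exact h'
    simpa [Real.log_one] using hlog.tendsto
  have hev2 : ∀ᶠ p in nhds ((1:ℝ), y), φ 0 ≤ φ (Real.log p.1) := htend.eventually hmin
  have hev3 : ∀ᶠ p in nhdsWithin ((1:ℝ), y) C, φ 0 ≤ φ (Real.log p.1) :=
    hev2.filter_mono nhdsWithin_le_nhds
  refine Filter.Eventually.mono (hev3.and eventually_mem_nhdsWithin) ?_
  rintro p ⟨hp1, hp2⟩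
  rw [hS1y, key p hp2]
  exact hp1
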